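/- Let G be a finitely generated pro-p group and let L be a ℤ_p-lattice (a free ℤ_p-module of finite rank) equipped with a continuous ℤ_p-linear right G-action. Then the rigidity r(L) is finite if and only if ℚ_p ⊗_{ℤ_p} L is a simple ℚ_p G-module. -/

import Mathlib

open Filter Topology
open scoped TensorProduct

/-- A profinite group that is pro-`p`. -/
def IsProPGroup (p : ℕ) (G : Type*) [Group G] [TopologicalSpace G] : Prop :=
  CompactSpace G ∧ T2Space G ∧ TotallyDisconnectedSpace G ∧
    ∀ N : Subgroup G, N.Normal → IsOpen (N : Set G) → ∃ k : ℕ, N.index = p ^ k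

/-- Topologically finitely generated. -/
def IsTopFG (G : Type*) [Group G] [TopologicalSpace G] [IsTopologicalGroup G] : Prop :=
  ∃ s : Finset G, (Subgroup.closure (s : Set G)).topologicalClosure = ⊤

variable (p : ℕ) [Fact p.Prime]

/-- The sublattice `p^k L` of a `ℤ_p`-lattice `L`. -/
noncomputable def pPowLat (L : Type*) [AddCommGroup L] [Module ℤ_[p] L] (k : ℕ) :
    Submodule ℤ_[p] L :=
  LinearMap.range (((p : ℤ_[p]) ^ k) • (LinearMap.id : L →ₗ[ℤ_[p]] L))

/-- `ℓ_L(M) = min { k : p^k L ⊆ M }`. -/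
noncomputable def ellLat (L : Type*) [AddCommGroup L] [Module ℤ_[p] L]
    (M : Submodule ℤ_[p] L) : ℕ :=
  sInf { k : ℕ | pPowLat p L k ≤ M }

/-- `u_L(M) = max { k : M ⊆ p^k L }`. -/
noncomputable def uLat (L : Type*) [AddCommGroup L] [Module ℤ_[p] L]
    (M : Submodule ℤ_[p] L) : ℕ :=
  sSup { k : ℕ | M ≤ pPowLat p L k }

/-! ### Auxiliary lemmas -/

section Aux

variable {L : Type*} [AddCommGroup L] [Module ℤ_[p] L]

lemma mem_pPowLat {k : ℕ} {x : L} :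
    x ∈ pPowLat p L k ↔ ∃ y : L, ((p:ℤ_[p])^k) • y = x := by
  simp [pPowLat, LinearMap.mem_range]

lemma pPow_smul_mem (k : ℕ) (y : L) : ((p:ℤ_[p])^k) • y ∈ pPowLat p L k :=
  (mem_pPowLat p).2 ⟨y, rfl⟩

lemma pPowLat_zero : pPowLat p L 0 = ⊤ := by
  ext x; simp [mem_pPowLat]

lemma pPowLat_antitone {j k : ℕ} (h : j ≤ k) : pPowLat p L k ≤ pPowLat p L j := by
  intro x hx
  obtain ⟨y, rfl⟩ := (mem_pPowLat p).1 hx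
  refine (mem_pPowLat p).2 ⟨((p:ℤ_[p])^(k-j)) • y, ?_⟩
  rw [smul_smul, ← pow_add, Nat.add_sub_cancel' h]

lemma mem_pPowLat_iff_repr {ι : Type*} (b : Module.Basis ι ℤ_[p] L) {k : ℕ} {x : L} [Fintype ι] :
    x ∈ pPowLat p L k ↔ ∀ i, (p:ℤ_[p])^k ∣ b.repr x i := by
  constructor
  · rintro hx i
    obtain ⟨y, rfl⟩ := (mem_pPowLat p).1 hx
    exact ⟨b.repr y i, by simp⟩
  · intro h
    choose c hc using h
    refine (mem_pPowLat p).2 ⟨b.equivFun.symm c, b.equivFun.injective ?_⟩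
    rw [map_smul, b.equivFun.apply_symm_apply]
    ext i
    simp [Module.Basis.equivFun_apply, hc, smul_eq_mul]

lemma map_pPowLat_le (f : L →ₗ[ℤ_[p]] L) (k : ℕ) :
    (pPowLat p L k).map f ≤ pPowLat p L k := by
  rintro x ⟨y, hy, rfl⟩
  obtain ⟨z, rfl⟩ := (mem_pPowLat p).1 hy
  exact (mem_pPowLat p).2 ⟨f z, by rw [map_smul]⟩

lemma pPow_smul_eq_zero [Module.Free ℤ_[p] L] {k : ℕ} {y : L}
    (h : ((p:ℤ_[p])^k) • y = 0) : y = 0 := by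
  have hp : ((p:ℤ_[p])^k) ≠ 0 := by
    apply pow_ne_zero
    exact_mod_cast (Fact.out : p.Prime).ne_zero
  rcases smul_eq_zero.1 h with h' | h'
  · exact absurd h' hp
  · exact h'

lemma dvd_iff_norm_le {n : ℕ} {a : ℤ_[p]} :
    (p:ℤ_[p])^n ∣ a ↔ ‖a‖ ≤ (p:ℝ)^(-(n:ℤ)) := by
  rw [PadicInt.norm_le_pow_iff_mem_span_pow, Ideal.mem_span_singleton]

lemma isOpen_dvd_set (n : ℕ) : IsOpen {a : ℤ_[p] | (p:ℤ_[p])^n ∣ a} := by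
  have h : {a : ℤ_[p] | (p:ℤ_[p])^n ∣ a} = {a : ℤ_[p] | ‖a‖ < (p:ℝ)^(-(n:ℤ)+1)} := by
    ext a
    rw [Set.mem_setOf_eq, Set.mem_setOf_eq, dvd_iff_norm_le,
      PadicInt.norm_le_pow_iff_norm_lt_pow_add_one]
  rw [h]
  exact isOpen_lt continuous_norm continuous_const

lemma exists_not_mem_pPow [Module.Free ℤ_[p] L] [Module.Finite ℤ_[p] L] {x : L} (hx : x ≠ 0) :
    ∃ t : ℕ, x ∉ pPowLat p L t := by
  classical
  set b := Module.Free.chooseBasis ℤ_[p] L with hb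
  have hrepr : b.repr x ≠ 0 := fun h => hx (by simpa using b.repr.map_eq_zero_iff.1 h)
  obtain ⟨i, hi⟩ := Finsupp.ne_iff.1 hrepr
  rw [Finsupp.coe_zero, Pi.zero_apply] at hi
  have hnorm : 0 < ‖b.repr x i‖ := norm_pos_iff.2 hi
  obtain ⟨t, ht⟩ := exists_pow_lt_of_lt_one hnorm
    (show (p:ℝ)⁻¹ < 1 by
      rw [inv_lt_one_iff₀]
      right
      exact_mod_cast (Fact.out : p.Prime).one_lt)
  refine ⟨t, fun hmem => ?_⟩
  have := ((mem_pPowLat_iff_repr p b).1 hmem) i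
  rw [dvd_iff_norm_le] at this
  have h2 : (p:ℝ)^(-(t:ℤ)) = ((p:ℝ)⁻¹)^t := by
    rw [zpow_neg, inv_pow, zpow_natCast]
  rw [h2] at this
  exact absurd (lt_of_le_of_lt this ht) (lt_irrefl _)

end Aux

section Aux2

variable {L : Type*} [AddCommGroup L] [Module ℤ_[p] L]

lemma nak (M N : Submodule ℤ_[p] L) (hN : N.FG)
    (h : N ≤ M ⊔ (Ideal.span {(p:ℤ_[p])}) • N) : N ≤ M := by
  set I : Ideal ℤ_[p] := Ideal.span {(p:ℤ_[p])} with hI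
  have hjac : I ≤ Ideal.jacobson ⊥ := by
    rw [IsLocalRing.jacobson_eq_maximalIdeal (⊥ : Ideal ℤ_[p]) bot_ne_top, hI,
      ← PadicInt.maximalIdeal_eq_span_p]
  have hmap : N.map M.mkQ ≤ I • (N.map M.mkQ) := by
    rintro y ⟨x, hx, rfl⟩
    obtain ⟨m, hm, z, hz, hxz⟩ := Submodule.mem_sup.1 (h hx)
    have hzz : M.mkQ x = M.mkQ z := by
      rw [← hxz, map_add]
      have : M.mkQ m = 0 := by
        rw [Submodule.mkQ_apply, Submodule.Quotient.mk_eq_zero]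
        exact hm
      rw [this, zero_add]
    have hz' : M.mkQ z ∈ I • N.map M.mkQ := by
      rw [← Submodule.map_smul'']
      exact Submodule.mem_map_of_mem hz
    rwa [hzz]
  have hbot := Submodule.eq_bot_of_le_smul_of_le_jacobson_bot I _ (hN.map _) hmap hjac
  intro x hx
  have hmem : M.mkQ x ∈ (⊥ : Submodule ℤ_[p] (L ⧸ M)) := hbot ▸ Submodule.mem_map_of_mem hx
  simpa [Submodule.mkQ_apply, Submodule.Quotient.mk_eq_zero] using hmem

lemma nak' [Module.Finite ℤ_[p] L] {M : Submodule ℤ_[p] L} {c : ℕ}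
    (h : pPowLat p L c ≤ M ⊔ pPowLat p L (c+1)) : pPowLat p L c ≤ M := by
  refine nak p M _ (IsNoetherian.noetherian _) (le_trans h (sup_le_sup_left ?_ M))
  intro x hx
  obtain ⟨y, rfl⟩ := (mem_pPowLat p).1 hx
  rw [pow_succ', mul_smul]
  exact Submodule.smul_mem_smul (Ideal.mem_span_singleton_self _) (pPow_smul_mem p c y)

end Aux2

section Tensor

variable {L : Type*} [AddCommGroup L] [Module ℤ_[p] L]

lemma coe_smul_one_tmul (r : ℤ_[p]) (y : L) :
    ((r : ℚ_[p])) • ((1:ℚ_[p]) ⊗ₜ[ℤ_[p]] y) = (1:ℚ_[p]) ⊗ₜ[ℤ_[p]] (r • y) := by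
  rw [TensorProduct.tmul_smul, ← PadicInt.algebraMap_apply, algebraMap_smul]

lemma exists_pow_mul_coe (k : ℚ_[p]) : ∃ (t : ℕ) (r : ℤ_[p]), ((p:ℚ_[p]))^t * k = r := by
  obtain ⟨t, ht⟩ := pow_unbounded_of_one_lt ‖k‖
    (show (1:ℝ) < p by exact_mod_cast (Fact.out : p.Prime).one_lt)
  have hnorm : ‖((p:ℚ_[p]))^t * k‖ ≤ 1 := by
    rw [norm_mul, Padic.norm_p_pow]
    have hp : (0:ℝ) < (p:ℝ) := by exact_mod_cast (Fact.out : p.Prime).pos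
    have hp0 : (0:ℝ) < (p:ℝ)^t := by positivity
    rw [zpow_neg, zpow_natCast]
    rw [inv_mul_le_iff₀ hp0, mul_one]
    exact ht.le
  exact ⟨t, ⟨_, hnorm⟩, rfl⟩

lemma one_tmul_eq_zero_iff [Module.Free ℤ_[p] L] {x : L} :
    (1:ℚ_[p]) ⊗ₜ[ℤ_[p]] x = 0 ↔ x = 0 := by
  constructor
  · intro h
    set b := Module.Free.chooseBasis ℤ_[p] L with hb
    have hco : ∀ i, b.repr x i = 0 := by
      intro i
      have h1 := congrArg (fun v => (b.baseChange ℚ_[p]).repr v i) h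
      simp only [Module.Basis.baseChange_repr_tmul, map_zero, Finsupp.coe_zero, Pi.zero_apply] at h1
      have h2 : ((b.repr x i : ℚ_[p])) = 0 := by
        rw [← PadicInt.algebraMap_apply, Algebra.algebraMap_eq_smul_one]
        exact h1
      exact PadicInt.coe_eq_zero.1 h2
    apply b.repr.map_eq_zero_iff.1
    ext i
    simp [hco i]
  · rintro rfl
    exact TensorProduct.tmul_zero _ _

lemma exists_pow_smul_eq_tmul (v : ℚ_[p] ⊗[ℤ_[p]] L) :
    ∃ (t : ℕ) (x : L), ((p:ℚ_[p])^t) • v = (1:ℚ_[p]) ⊗ₜ[ℤ_[p]] x := by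
  induction v using TensorProduct.induction_on with
  | zero => exact ⟨0, 0, by simp⟩
  | tmul k y =>
    obtain ⟨t, r, hr⟩ := exists_pow_mul_coe p k
    refine ⟨t, r • y, ?_⟩
    rw [TensorProduct.smul_tmul', smul_eq_mul, hr, ← coe_smul_one_tmul,
      TensorProduct.smul_tmul', smul_eq_mul, mul_one]
  | add u w hu hw =>
    obtain ⟨t₁, x₁, h₁⟩ := hu
    obtain ⟨t₂, x₂, h₂⟩ := hw
    refine ⟨t₁ + t₂, ((p:ℤ_[p])^t₂) • x₁ + ((p:ℤ_[p])^t₁) • x₂, ?_⟩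
    rw [smul_add, TensorProduct.tmul_add]
    congr 1
    · rw [add_comm t₁ t₂, pow_add, mul_smul, h₁, ← coe_smul_one_tmul]
      norm_cast
    · rw [pow_add, mul_smul, h₂, ← coe_smul_one_tmul]
      norm_cast

end Tensor

section Span

variable {L : Type*} [AddCommGroup L] [Module ℤ_[p] L]

lemma span_tmul_clear (N : Submodule ℤ_[p] L) (s : Set (ℚ_[p] ⊗[ℤ_[p]] L))
    (hs : ∀ v ∈ s, ∃ y ∈ N, v = (1:ℚ_[p]) ⊗ₜ[ℤ_[p]] y) {v : ℚ_[p] ⊗[ℤ_[p]] L}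
    (hv : v ∈ Submodule.span ℚ_[p] s) :
    ∃ (t : ℕ), ∃ y ∈ N, ((p:ℚ_[p])^t) • v = (1:ℚ_[p]) ⊗ₜ[ℤ_[p]] y := by
  induction hv using Submodule.span_induction with
  | mem v hvs =>
    obtain ⟨y, hy, rfl⟩ := hs v hvs
    exact ⟨0, y, hy, by simp⟩
  | zero => exact ⟨0, 0, N.zero_mem, by simp⟩
  | add u w _ _ hu hw =>
    obtain ⟨t₁, y₁, hy₁, h₁⟩ := hu
    obtain ⟨t₂, y₂, hy₂, h₂⟩ := hw
    refine ⟨t₁ + t₂, ((p:ℤ_[p])^t₂) • y₁ + ((p:ℤ_[p])^t₁) • y₂,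
      N.add_mem (N.smul_mem _ hy₁) (N.smul_mem _ hy₂), ?_⟩
    rw [smul_add, TensorProduct.tmul_add]
    congr 1
    · rw [add_comm t₁ t₂, pow_add, mul_smul, h₁, ← coe_smul_one_tmul]
      norm_cast
    · rw [pow_add, mul_smul, h₂, ← coe_smul_one_tmul]
      norm_cast
  | smul k u _ hu =>
    obtain ⟨t, y, hy, h⟩ := hu
    obtain ⟨s', r, hr⟩ := exists_pow_mul_coe p k
    refine ⟨t + s', r • y, N.smul_mem _ hy, ?_⟩
    have heq : ((p:ℚ_[p])^(t+s')) • (k • u) = ((r:ℚ_[p])) • (((p:ℚ_[p])^t) • u) := by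
      rw [smul_smul, smul_smul, ← hr]
      congr 1
      ring
    rw [heq, h, coe_smul_one_tmul]

end Span

section Orbit

variable {L : Type*} [AddCommGroup L] [Module ℤ_[p] L] {G : Type*} [Group G]

/-- The `ℤ_p`-span of the orbit of `x` under the group action. -/
noncomputable def orbitSpan (ρ : G →* (L ≃ₗ[ℤ_[p]] L)) (x : L) : Submodule ℤ_[p] L :=
  Submodule.span ℤ_[p] (Set.range fun g => ρ g x)

lemma orbitSpan_le {ρ : G →* (L ≃ₗ[ℤ_[p]] L)} {M : Submodule ℤ_[p] L}
    (hM : ∀ g : G, M.map ((ρ g : L ≃ₗ[ℤ_[p]] L) : L →ₗ[ℤ_[p]] L) ≤ M) {x : L} (hx : x ∈ M) :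
    orbitSpan p ρ x ≤ M := by
  rw [orbitSpan, Submodule.span_le]
  rintro _ ⟨g, rfl⟩
  exact hM g ⟨x, hx, rfl⟩

lemma orbit_stab [Module.Finite ℤ_[p] L] (ρ : G →* (L ≃ₗ[ℤ_[p]] L)) {x x' : L} {c : ℕ}
    (h : pPowLat p L c ≤ orbitSpan p ρ x) (hd : x' - x ∈ pPowLat p L (c+1)) :
    pPowLat p L c ≤ orbitSpan p ρ x' := by
  apply nak' p
  refine le_trans h ?_
  rw [orbitSpan, Submodule.span_le]
  rintro _ ⟨g, rfl⟩
  have hx : ρ g x = ρ g x' - ρ g (x' - x) := by rw [map_sub]; abel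
  have h1 : ρ g x' ∈ orbitSpan p ρ x' ⊔ pPowLat p L (c+1) :=
    Submodule.mem_sup_left (Submodule.subset_span ⟨g, rfl⟩)
  have h2 : ρ g (x' - x) ∈ orbitSpan p ρ x' ⊔ pPowLat p L (c+1) := by
    apply Submodule.mem_sup_right
    exact map_pPowLat_le p ((ρ g : L ≃ₗ[ℤ_[p]] L) : L →ₗ[ℤ_[p]] L) (c+1) ⟨x' - x, hd, rfl⟩
  show (ρ g) x ∈ (orbitSpan p ρ x' ⊔ pPowLat p L (c+1) : Submodule ℤ_[p] L)
  rw [hx]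
  exact Submodule.sub_mem _ h1 h2

lemma orbit_bounded [Module.Free ℤ_[p] L] [Module.Finite ℤ_[p] L]
    (ρ : G →* (L ≃ₗ[ℤ_[p]] L))
    (hsimp : ∀ x : L, x ∉ pPowLat p L 1 → ∃ c : ℕ, pPowLat p L c ≤ orbitSpan p ρ x) :
    ∃ C : ℕ, ∀ x : L, x ∉ pPowLat p L 1 → pPowLat p L C ≤ orbitSpan p ρ x := by
  classical
  set ι := Module.Free.ChooseBasisIndex ℤ_[p] L with hι
  set b : Module.Basis ι ℤ_[p] L := Module.Free.chooseBasis ℤ_[p] L with hbdef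
  have hrepr : ∀ (v : ι → ℤ_[p]) i, b.repr (b.equivFun.symm v) i = v i := by
    intro v i
    rw [← Module.Basis.equivFun_apply, b.equivFun.apply_symm_apply]
  set S : Set (ι → ℤ_[p]) := {v | b.equivFun.symm v ∉ pPowLat p L 1} with hSdef
  have hSc : IsClosed S := by
    have hS2 : S = {v : ι → ℤ_[p] | ¬ ∀ i, (p:ℤ_[p])^1 ∣ v i} := by
      ext v
      rw [hSdef, Set.mem_setOf_eq, Set.mem_setOf_eq, mem_pPowLat_iff_repr p b]
      simp only [hrepr]
    have hS3 : {v : ι → ℤ_[p] | ¬ ∀ i, (p:ℤ_[p])^1 ∣ v i} =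
        (⋂ i, (fun v : ι → ℤ_[p] => v i) ⁻¹' {a | (p:ℤ_[p])^1 ∣ a})ᶜ := by
      ext v
      simp
    rw [hS2, hS3]
    exact (isOpen_iInter_of_finite fun i =>
      (isOpen_dvd_set p 1).preimage (continuous_apply i)).isClosed_compl
  have hcomp : IsCompact S := hSc.isCompact
  have hchoice : ∀ v : S, ∃ c, pPowLat p L c ≤ orbitSpan p ρ (b.equivFun.symm (v : ι → ℤ_[p])) :=
    fun v => hsimp _ v.2
  choose cc hcc using hchoice
  set U : S → Set (ι → ℤ_[p]) :=
    fun v => {w | ∀ i, (p:ℤ_[p])^(cc v + 1) ∣ (w i - (v : ι → ℤ_[p]) i)} with hUdef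
  have hUopen : ∀ v, IsOpen (U v) := by
    intro v
    have : U v = ⋂ i, (fun w : ι → ℤ_[p] => w i - (v : ι → ℤ_[p]) i) ⁻¹'
        {a | (p:ℤ_[p])^(cc v + 1) ∣ a} := by
      ext w; simp [hUdef]
    rw [this]
    exact isOpen_iInter_of_finite fun i =>
      (isOpen_dvd_set p _).preimage ((continuous_apply i).sub continuous_const)
  have hcover : S ⊆ ⋃ v : S, U v := by
    intro w hw
    exact Set.mem_iUnion.2 ⟨⟨w, hw⟩, fun i => by simp⟩
  obtain ⟨t, ht⟩ := hcomp.elim_finite_subcover U hUopen hcover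
  refine ⟨t.sup cc, ?_⟩
  intro x hx
  have hvS : b.equivFun x ∈ S := by
    rw [hSdef, Set.mem_setOf_eq, b.equivFun.symm_apply_apply]
    exact hx
  obtain ⟨v₀, hmem⟩ := Set.mem_iUnion.1 (ht hvS)
  obtain ⟨hv₀t, hw⟩ := Set.mem_iUnion.1 hmem
  have hnk : x - b.equivFun.symm (v₀ : ι → ℤ_[p]) ∈ pPowLat p L (cc v₀ + 1) := by
    rw [mem_pPowLat_iff_repr p b]
    intro i
    rw [map_sub]
    have h1 : b.repr x i = b.equivFun x i := by rw [Module.Basis.equivFun_apply]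
    rw [Finsupp.sub_apply, h1, hrepr]
    exact hw i
  have hfinal : pPowLat p L (cc v₀) ≤ orbitSpan p ρ x := orbit_stab p ρ (hcc v₀) hnk
  exact le_trans (pPowLat_antitone p (Finset.le_sup hv₀t)) hfinal

end Orbit

section MainLemmas

variable {G : Type*} [Group G] {L : Type*} [AddCommGroup L] [Module ℤ_[p] L]
  [Module.Free ℤ_[p] L] [Module.Finite ℤ_[p] L]

lemma smul_orbitSpan_mem {ρ : G →* (L ≃ₗ[ℤ_[p]] L)} {M : Submodule ℤ_[p] L}
    (hstab : ∀ g : G, M.map ((ρ g : L ≃ₗ[ℤ_[p]] L) : L →ₗ[ℤ_[p]] L) ≤ M)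
    {x x' : L} {u : ℕ} (hx' : ((p:ℤ_[p])^u) • x' = x) (hxM : x ∈ M) :
    ∀ y ∈ orbitSpan p ρ x', ((p:ℤ_[p])^u) • y ∈ M := by
  intro y hy
  have hy' : y ∈ Submodule.span ℤ_[p] (Set.range fun g => ρ g x') := hy
  clear hy
  induction hy' using Submodule.span_induction with
  | mem v hvs =>
    obtain ⟨g, rfl⟩ := hvs
    show ((p:ℤ_[p])^u) • (ρ g) x' ∈ M
    have heq : ((p:ℤ_[p])^u) • (ρ g) x' = (ρ g) x := by rw [← map_smul, hx']
    rw [heq]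
    exact hstab g ⟨x, hxM, rfl⟩
  | zero => rw [smul_zero]; exact M.zero_mem
  | add a b _ _ ha hb => rw [smul_add]; exact M.add_mem ha hb
  | smul r a _ ha => rw [smul_comm]; exact M.smul_mem r ha

lemma main_backward (ρ : G →* (L ≃ₗ[ℤ_[p]] L))
    (hV : Nontrivial (ℚ_[p] ⊗[ℤ_[p]] L))
    (hsimp : ∀ W : Submodule ℚ_[p] (ℚ_[p] ⊗[ℤ_[p]] L),
        (∀ g : G, W.map (LinearMap.baseChange ℚ_[p]
            ((ρ g : L ≃ₗ[ℤ_[p]] L) : L →ₗ[ℤ_[p]] L)) ≤ W) →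
        W = ⊥ ∨ W = ⊤) :
    Nontrivial L ∧ ∃ C : ℕ, ∀ M : Submodule ℤ_[p] L,
        (∃ k : ℕ, pPowLat p L k ≤ M) →
        (∀ g : G, M.map ((ρ g : L ≃ₗ[ℤ_[p]] L) : L →ₗ[ℤ_[p]] L) ≤ M) →
        ellLat p L M ≤ uLat p L M + C := by
  classical
  have hLnt : Nontrivial L := by
    by_contra h
    have hsub : Subsingleton L := not_nontrivial_iff_subsingleton.1 h
    have hVsub : Subsingleton (ℚ_[p] ⊗[ℤ_[p]] L) := by
      constructor
      intro a b
      have hz : ∀ v : ℚ_[p] ⊗[ℤ_[p]] L, v = 0 := by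
        intro v
        induction v using TensorProduct.induction_on with
        | zero => rfl
        | tmul k y => rw [Subsingleton.elim y 0, TensorProduct.tmul_zero]
        | add u w hu hw => rw [hu, hw, add_zero]
      rw [hz a, hz b]
    exact absurd hV (not_nontrivial_iff_subsingleton.2 hVsub)
  have horb : ∀ x : L, x ∉ pPowLat p L 1 → ∃ c : ℕ, pPowLat p L c ≤ orbitSpan p ρ x := by
    intro x hx
    have hx0 : x ≠ 0 := fun h => hx (h ▸ (pPowLat p L 1).zero_mem)
    set W : Submodule ℚ_[p] (ℚ_[p] ⊗[ℤ_[p]] L) :=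
      Submodule.span ℚ_[p] (Set.range fun g : G => (1:ℚ_[p]) ⊗ₜ[ℤ_[p]] (ρ g x)) with hWdef
    have hWstab : ∀ g : G, W.map (LinearMap.baseChange ℚ_[p]
        ((ρ g : L ≃ₗ[ℤ_[p]] L) : L →ₗ[ℤ_[p]] L)) ≤ W := by
      intro g
      rw [hWdef, Submodule.map_span, Submodule.span_le]
      rintro _ ⟨_, ⟨h, rfl⟩, rfl⟩
      apply Submodule.subset_span
      refine ⟨g * h, ?_⟩
      show (1:ℚ_[p]) ⊗ₜ[ℤ_[p]] (ρ (g * h) x) = _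
      rw [LinearMap.baseChange_tmul]
      congr 1
      rw [map_mul]
      rfl
    have hWne : W ≠ ⊥ := by
      intro hbot
      have hmem : (1:ℚ_[p]) ⊗ₜ[ℤ_[p]] x ∈ W := by
        apply Submodule.subset_span
        refine ⟨1, ?_⟩
        show (1:ℚ_[p]) ⊗ₜ[ℤ_[p]] (ρ (1:G) x) = (1:ℚ_[p]) ⊗ₜ[ℤ_[p]] x
        rw [map_one]
        rfl
      rw [hbot, Submodule.mem_bot] at hmem
      exact hx0 ((one_tmul_eq_zero_iff p).1 hmem)
    have hWtop : W = ⊤ := (hsimp W hWstab).resolve_left hWne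
    have hz : ∀ z : L, ∃ t : ℕ, ((p:ℤ_[p])^t) • z ∈ orbitSpan p ρ x := by
      intro z
      have hmem : (1:ℚ_[p]) ⊗ₜ[ℤ_[p]] z ∈
          Submodule.span ℚ_[p] (Set.range fun g : G => (1:ℚ_[p]) ⊗ₜ[ℤ_[p]] (ρ g x)) := by
        rw [← hWdef, hWtop]
        exact Submodule.mem_top
      obtain ⟨t, y, hy, hty⟩ := span_tmul_clear p (orbitSpan p ρ x) _
        (by rintro _ ⟨g, rfl⟩; exact ⟨ρ g x, Submodule.subset_span ⟨g, rfl⟩, rfl⟩) hmem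
      refine ⟨t, ?_⟩
      have heq : (1:ℚ_[p]) ⊗ₜ[ℤ_[p]] (((p:ℤ_[p])^t) • z) = (1:ℚ_[p]) ⊗ₜ[ℤ_[p]] y := by
        rw [← coe_smul_one_tmul, ← hty]
        norm_cast
      have h0 : ((p:ℤ_[p])^t) • z - y = 0 := by
        apply (one_tmul_eq_zero_iff p).1
        rw [TensorProduct.tmul_sub, heq, sub_self]
      rw [sub_eq_zero] at h0
      rw [h0]
      exact hy
    set bb := Module.Free.chooseBasis ℤ_[p] L with hbb
    choose tt htt using fun i => hz (bb i)
    refine ⟨Finset.univ.sup tt, ?_⟩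
    intro w hw
    obtain ⟨z, rfl⟩ := (mem_pPowLat p).1 hw
    set c := Finset.univ.sup tt with hcdef
    have hterm : ∀ i, (bb.repr z i * (p:ℤ_[p])^(c - tt i)) • (((p:ℤ_[p])^(tt i)) • bb i)
        = ((p:ℤ_[p])^c) • (bb.repr z i • bb i) := by
      intro i
      rw [smul_smul, smul_smul]
      congr 1
      rw [mul_assoc, ← pow_add, Nat.sub_add_cancel (Finset.le_sup (Finset.mem_univ i))]
      ring
    have hsum : ∑ i, (bb.repr z i * (p:ℤ_[p])^(c - tt i)) • (((p:ℤ_[p])^(tt i)) • bb i)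
        = ((p:ℤ_[p])^c) • z := by
      rw [Finset.sum_congr rfl fun i _ => hterm i, ← Finset.smul_sum, Module.Basis.sum_repr]
    rw [← hsum]
    exact Submodule.sum_mem _ fun i _ =>
      Submodule.smul_mem _ _ (htt i)
  obtain ⟨C, hC⟩ := orbit_bounded p ρ horb
  refine ⟨hLnt, C, ?_⟩
  intro M hopen hstab
  obtain ⟨k0, hk0⟩ := hopen
  obtain ⟨x₀, hx₀⟩ := exists_ne (0 : L)
  have hm₀M : ((p:ℤ_[p])^k0) • x₀ ∈ M := hk0 (pPow_smul_mem p k0 x₀)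
  have hm₀ : ((p:ℤ_[p])^k0) • x₀ ≠ 0 := fun h => hx₀ (pPow_smul_eq_zero p h)
  obtain ⟨tb, htb⟩ := exists_not_mem_pPow p hm₀
  set US := {k : ℕ | M ≤ pPowLat p L k} with hUS
  have hUS0 : 0 ∈ US := by
    rw [hUS, Set.mem_setOf_eq, pPowLat_zero]
    exact le_top
  have hUSbdd : BddAbove US := by
    refine ⟨tb, fun k hk => ?_⟩
    by_contra hlt
    push_neg at hlt
    exact htb (pPowLat_antitone p hlt.le (hk hm₀M))
  have huU : uLat p L M ∈ US := Nat.sSup_mem ⟨0, hUS0⟩ hUSbdd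
  have hu1 : uLat p L M + 1 ∉ US := by
    intro h
    have h2 := le_csSup hUSbdd h
    have h3 : sSup US = uLat p L M := rfl
    omega
  set u := uLat p L M with hudef
  obtain ⟨x, hxM, hxnot⟩ := SetLike.not_le_iff_exists.1 (show ¬ M ≤ pPowLat p L (u + 1) from hu1)
  have hxmem : x ∈ pPowLat p L u := huU hxM
  obtain ⟨x', hx'⟩ := (mem_pPowLat p).1 hxmem
  have hx'not : x' ∉ pPowLat p L 1 := by
    intro hmem
    obtain ⟨z, hzeq⟩ := (mem_pPowLat p).1 hmem
    apply hxnot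
    refine (mem_pPowLat p).2 ⟨z, ?_⟩
    rw [← hx', ← hzeq, smul_smul, ← pow_add]
  have horbx : pPowLat p L C ≤ orbitSpan p ρ x' := hC x' hx'not
  have hell : pPowLat p L (u + C) ≤ M := by
    intro w hw
    obtain ⟨z, rfl⟩ := (mem_pPowLat p).1 hw
    have heq : ((p:ℤ_[p])^(u+C)) • z = ((p:ℤ_[p])^u) • (((p:ℤ_[p])^C) • z) := by
      rw [smul_smul, ← pow_add]
    rw [heq]
    exact smul_orbitSpan_mem p hstab hx' hxM _ (horbx (pPow_smul_mem p C z))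
  exact Nat.sInf_le hell

lemma main_forward (ρ : G →* (L ≃ₗ[ℤ_[p]] L)) (hLnt : Nontrivial L) (C : ℕ)
    (hC : ∀ M : Submodule ℤ_[p] L,
        (∃ k : ℕ, pPowLat p L k ≤ M) →
        (∀ g : G, M.map ((ρ g : L ≃ₗ[ℤ_[p]] L) : L →ₗ[ℤ_[p]] L) ≤ M) →
        ellLat p L M ≤ uLat p L M + C) :
    Nontrivial (ℚ_[p] ⊗[ℤ_[p]] L) ∧ ∀ W : Submodule ℚ_[p] (ℚ_[p] ⊗[ℤ_[p]] L),
        (∀ g : G, W.map (LinearMap.baseChange ℚ_[p]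
            ((ρ g : L ≃ₗ[ℤ_[p]] L) : L →ₗ[ℤ_[p]] L)) ≤ W) →
        W = ⊥ ∨ W = ⊤ := by
  classical
  have hp0 : ((p:ℚ_[p])) ≠ 0 := by exact_mod_cast (Fact.out : p.Prime).ne_zero
  have hVnt : Nontrivial (ℚ_[p] ⊗[ℤ_[p]] L) := by
    obtain ⟨x, hx⟩ := exists_ne (0 : L)
    refine nontrivial_of_ne ((1:ℚ_[p]) ⊗ₜ[ℤ_[p]] x) 0 ?_
    rw [Ne, one_tmul_eq_zero_iff p]
    exact hx
  refine ⟨hVnt, fun W hstabW => ?_⟩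
  by_contra hcon
  push_neg at hcon
  obtain ⟨hWbot, hWtop⟩ := hcon
  set M₀ : Submodule ℤ_[p] L :=
    Submodule.comap ((TensorProduct.mk ℤ_[p] ℚ_[p] L) 1) (W.restrictScalars ℤ_[p]) with hM₀def
  have hM₀mem : ∀ x : L, x ∈ M₀ ↔ (1:ℚ_[p]) ⊗ₜ[ℤ_[p]] x ∈ W := by
    intro x
    rw [hM₀def, Submodule.mem_comap, TensorProduct.mk_apply, Submodule.restrictScalars_mem]
  have hsat : ∀ (x : L), ((p:ℤ_[p])) • x ∈ M₀ → x ∈ M₀ := by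
    intro x hx
    rw [hM₀mem] at hx ⊢
    have h1 : (1:ℚ_[p]) ⊗ₜ[ℤ_[p]] ((p:ℤ_[p]) • x) = ((p:ℚ_[p])) • ((1:ℚ_[p]) ⊗ₜ[ℤ_[p]] x) := by
      rw [← coe_smul_one_tmul]
      norm_cast
    rw [h1] at hx
    have h2 := W.smul_mem ((p:ℚ_[p]))⁻¹ hx
    rwa [inv_smul_smul₀ hp0] at h2
  have hsatk : ∀ (k : ℕ) (x : L), ((p:ℤ_[p])^k) • x ∈ M₀ → x ∈ M₀ := by
    intro k
    induction k with
    | zero =>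
      intro x hx
      simpa using hx
    | succ n ih =>
      intro x hx
      refine hsat x (ih _ ?_)
      rw [smul_smul, mul_comm, ← pow_succ']
      exact hx
  have hstabM₀ : ∀ g : G, M₀.map ((ρ g : L ≃ₗ[ℤ_[p]] L) : L →ₗ[ℤ_[p]] L) ≤ M₀ := by
    rintro g _ ⟨x, hx, rfl⟩
    have hx1 : (1:ℚ_[p]) ⊗ₜ[ℤ_[p]] x ∈ W := (hM₀mem x).1 hx
    rw [hM₀mem]
    have heq : (1:ℚ_[p]) ⊗ₜ[ℤ_[p]] (((ρ g : L ≃ₗ[ℤ_[p]] L) : L →ₗ[ℤ_[p]] L) x)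
        = LinearMap.baseChange ℚ_[p] ((ρ g : L ≃ₗ[ℤ_[p]] L) : L →ₗ[ℤ_[p]] L)
          ((1:ℚ_[p]) ⊗ₜ[ℤ_[p]] x) := by
      rw [LinearMap.baseChange_tmul]
    rw [heq]
    exact hstabW g ⟨_, hx1, rfl⟩
  -- a nonzero element of M₀
  obtain ⟨w, hwW, hw0⟩ := (Submodule.ne_bot_iff W).1 hWbot
  obtain ⟨t, x₁, hx₁⟩ := exists_pow_smul_eq_tmul p w
  have hpt : ((p:ℚ_[p])^t) ≠ 0 := pow_ne_zero _ hp0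
  have hx₁W : (1:ℚ_[p]) ⊗ₜ[ℤ_[p]] x₁ ∈ W := hx₁ ▸ W.smul_mem _ hwW
  have hx₁0 : x₁ ≠ 0 := by
    intro h
    rw [h, TensorProduct.tmul_zero] at hx₁
    apply hw0
    calc w = ((p:ℚ_[p])^t)⁻¹ • (((p:ℚ_[p])^t) • w) := (inv_smul_smul₀ hpt w).symm
    _ = ((p:ℚ_[p])^t)⁻¹ • (0 : ℚ_[p] ⊗[ℤ_[p]] L) := by rw [hx₁]
    _ = 0 := smul_zero _
  -- a primitive element of M₀
  set DS := {k : ℕ | x₁ ∈ pPowLat p L k} with hDS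
  have hDS0 : 0 ∈ DS := by
    rw [hDS, Set.mem_setOf_eq, pPowLat_zero]
    exact Submodule.mem_top
  obtain ⟨tb, htb⟩ := exists_not_mem_pPow p hx₁0
  have hDSb : BddAbove DS := by
    refine ⟨tb, fun k hk => ?_⟩
    by_contra h
    push_neg at h
    exact htb (pPowLat_antitone p h.le hk)
  set d := sSup DS with hddef
  have hdmem : x₁ ∈ pPowLat p L d := Nat.sSup_mem ⟨0, hDS0⟩ hDSb
  have hd1 : x₁ ∉ pPowLat p L (d+1) := by
    intro h
    have h2 := le_csSup hDSb (show d + 1 ∈ DS from h)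
    omega
  obtain ⟨y₀, hy₀⟩ := (mem_pPowLat p).1 hdmem
  have hy₀M : y₀ ∈ M₀ := hsatk d y₀ (by rw [hy₀]; exact (hM₀mem x₁).2 hx₁W)
  have hy₀p : y₀ ∉ pPowLat p L 1 := by
    intro hmem
    obtain ⟨z, hz⟩ := (mem_pPowLat p).1 hmem
    apply hd1
    refine (mem_pPowLat p).2 ⟨z, ?_⟩
    rw [← hy₀, ← hz, smul_smul, ← pow_add]
  -- an element outside M₀ ⊔ pL
  have hnotall : ¬ (⊤ : Submodule ℤ_[p] L) ≤ M₀ ⊔ pPowLat p L 1 := by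
    intro hle
    have h0 : pPowLat p L 0 ≤ M₀ ⊔ pPowLat p L (0+1) := by
      rw [pPowLat_zero]
      exact hle
    have hM₀top : (⊤ : Submodule ℤ_[p] L) ≤ M₀ := by
      have h1 := nak' p h0
      rwa [pPowLat_zero] at h1
    apply hWtop
    rw [eq_top_iff]
    intro v _
    obtain ⟨t', x', hx'⟩ := exists_pow_smul_eq_tmul p v
    have hx'W : (1:ℚ_[p]) ⊗ₜ[ℤ_[p]] x' ∈ W := (hM₀mem x').1 (hM₀top trivial)
    have hpt' : ((p:ℚ_[p])^t') ≠ 0 := pow_ne_zero _ hp0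
    have hv : v = ((p:ℚ_[p])^t')⁻¹ • ((1:ℚ_[p]) ⊗ₜ[ℤ_[p]] x') := by
      rw [← hx', inv_smul_smul₀ hpt']
    rw [hv]
    exact W.smul_mem _ hx'W
  obtain ⟨x₂, _, hx₂⟩ := SetLike.not_le_iff_exists.1 hnotall
  -- the test module
  set MM := M₀ ⊔ pPowLat p L (C+1) with hMM
  have hopen : ∃ k, pPowLat p L k ≤ MM := ⟨C+1, le_sup_right⟩
  have hstabMM : ∀ g : G, MM.map ((ρ g : L ≃ₗ[ℤ_[p]] L) : L →ₗ[ℤ_[p]] L) ≤ MM := by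
    intro g
    rw [hMM, Submodule.map_sup]
    exact sup_le (le_trans (hstabM₀ g) le_sup_left)
      (le_trans (map_pPowLat_le p _ _) le_sup_right)
  have hbound := hC MM hopen hstabMM
  have huset : {k : ℕ | MM ≤ pPowLat p L k} = {0} := by
    ext k
    simp only [Set.mem_setOf_eq, Set.mem_singleton_iff]
    constructor
    · intro h
      by_contra hk0
      have hk1 : 1 ≤ k := Nat.one_le_iff_ne_zero.2 hk0
      exact hy₀p (pPowLat_antitone p hk1 (h (Submodule.mem_sup_left hy₀M)))
    · rintro rfl
      rw [pPowLat_zero]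
      exact le_top
  have hu0 : uLat p L MM = 0 := by
    rw [uLat, huset, csSup_singleton]
  have hellge : ∀ j ∈ {k : ℕ | pPowLat p L k ≤ MM}, C + 1 ≤ j := by
    intro j hj
    by_contra hlt
    push_neg at hlt
    have hx2m : ((p:ℤ_[p])^j) • x₂ ∈ M₀ ⊔ pPowLat p L (C+1) := hj (pPow_smul_mem p j x₂)
    obtain ⟨m, hm, z, hz, hmz⟩ := Submodule.mem_sup.1 hx2m
    obtain ⟨z', rfl⟩ := (mem_pPowLat p).1 hz
    have hj' : j ≤ C + 1 := by omega
    have key : ((p:ℤ_[p])^j) • (x₂ - ((p:ℤ_[p])^(C+1-j)) • z') = m := by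
      rw [smul_sub, smul_smul, ← pow_add, Nat.add_sub_cancel' hj']
      rw [← hmz]
      abel
    have hsatm : x₂ - ((p:ℤ_[p])^(C+1-j)) • z' ∈ M₀ := hsatk j _ (by rw [key]; exact hm)
    apply hx₂
    have h1 : ((p:ℤ_[p])^(C+1-j)) • z' ∈ pPowLat p L 1 :=
      pPowLat_antitone p (show 1 ≤ C+1-j by omega) (pPow_smul_mem p _ z')
    have hx2eq : x₂ = (x₂ - ((p:ℤ_[p])^(C+1-j)) • z') + ((p:ℤ_[p])^(C+1-j)) • z' := by abel
    rw [hx2eq]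
    exact Submodule.add_mem _ (Submodule.mem_sup_left hsatm) (Submodule.mem_sup_right h1)
  have hellC : C + 1 ≤ ellLat p L MM :=
    le_csInf ⟨C+1, show pPowLat p L (C+1) ≤ MM from le_sup_right⟩ hellge
  rw [hu0] at hbound
  omega

end MainLemmas

/-- **Proposition 2.2 of [HeKlTh25].** Let `G` be a finitely generated pro-`p` group and `L` a
`ℤ_p`-lattice (free `ℤ_p`-module of finite rank) with a continuous `ℤ_p`-linear `G`-action
(given by `ρ`; continuity is expressed by openness of the congruence stabilizers). Then the
rigidity `r(L) = sup { ℓ_L(M) − u_L(M) : M an open ℤ_pG-submodule of L }` is finite — i.e.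
`L ≠ 0` (excluding the convention `r({0}) = −∞`) and the quantities `ℓ_L(M) − u_L(M)` are
bounded — if and only if `ℚ_p ⊗_{ℤ_p} L` is a simple `ℚ_p G`-module. Here "open" submodule
means one containing some `p^k L`. -/
theorem rigidity_finite_iff_tensor_simple
    (G : Type) [Group G] [TopologicalSpace G] [IsTopologicalGroup G]
    (hG : IsProPGroup p G) (hfg : IsTopFG G)
    (L : Type) [AddCommGroup L] [Module ℤ_[p] L] [Module.Free ℤ_[p] L] [Module.Finite ℤ_[p] L]
    (ρ : G →* (L ≃ₗ[ℤ_[p]] L))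
    (hcont : ∀ k : ℕ, IsOpen { g : G | ∀ m : L, ρ g m - m ∈ pPowLat p L k }) :
    (Nontrivial L ∧ ∃ C : ℕ, ∀ M : Submodule ℤ_[p] L,
        (∃ k : ℕ, pPowLat p L k ≤ M) →
        (∀ g : G, M.map ((ρ g : L ≃ₗ[ℤ_[p]] L) : L →ₗ[ℤ_[p]] L) ≤ M) →
        ellLat p L M ≤ uLat p L M + C) ↔
    (Nontrivial (ℚ_[p] ⊗[ℤ_[p]] L) ∧ ∀ W : Submodule ℚ_[p] (ℚ_[p] ⊗[ℤ_[p]] L),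
        (∀ g : G, W.map (LinearMap.baseChange ℚ_[p]
            ((ρ g : L ≃ₗ[ℤ_[p]] L) : L →ₗ[ℤ_[p]] L)) ≤ W) →
        W = ⊥ ∨ W = ⊤) := by
  constructor
  · rintro ⟨hnt, C, hC⟩
    exact main_forward p ρ hnt C hC
  · rintro ⟨hnt, hsimp⟩
    exact main_backward p ρ hnt hsimp
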